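/- For geometric sampling with parameter x ∈ (0,1], the matrix q(n:m) = C(n,m) x^m (1-x)^{n-m} / (1 - (1-x)^n), 1 ≤ m ≤ n, defines a probability distribution on {1,…,n} for each n and satisfies the regenerative recursion q(n:m) = ((m+1)/(n+1)) q(n+1:m+1) + ((n+1-m)/(n+1)) q(n+1:m) + (1/(n+1)) q(n+1:1) q(n:m). -/

import Mathlib

/-- Decrement matrix of geometric sampling with parameter `x`: the binomial distribution
conditioned on a positive value. -/
noncomputable def geomQ (x : ℝ) (n m : ℕ) : ℝ :=
  (n.choose m : ℝ) * x ^ m * (1 - x) ^ (n - m) / (1 - (1 - x) ^ n)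

theorem stmt5 (x : ℝ) (hx0 : 0 < x) (hx1 : x ≤ 1) :
    (∀ n m : ℕ, 1 ≤ m → m ≤ n → 0 ≤ geomQ x n m) ∧
    (∀ n : ℕ, 1 ≤ n → ∑ m ∈ Finset.Icc 1 n, geomQ x n m = 1) ∧
    (∀ n m : ℕ, 1 ≤ m → m ≤ n →
      geomQ x n m
        = ((m : ℝ) + 1) / ((n : ℝ) + 1) * geomQ x (n + 1) (m + 1)
        + ((n : ℝ) + 1 - (m : ℝ)) / ((n : ℝ) + 1) * geomQ x (n + 1) m
        + 1 / ((n : ℝ) + 1) * geomQ x (n + 1) 1 * geomQ x n m) := by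
  have hy0 : (0:ℝ) ≤ 1 - x := by linarith
  have hy1 : (1:ℝ) - x < 1 := by linarith
  have hden : ∀ n : ℕ, 1 ≤ n → 0 < 1 - (1 - x) ^ n := by
    intro n hn
    have : (1 - x) ^ n < 1 := pow_lt_one₀ hy0 hy1 (by omega)
    linarith
  refine ⟨?_, ?_, ?_⟩
  · intro n m hm hmn
    have hd := hden n (le_trans hm hmn)
    unfold geomQ
    positivity
  · intro n hn
    have hd := hden n hn
    have key : ∑ m ∈ Finset.Icc 1 n, (n.choose m : ℝ) * x ^ m * (1 - x) ^ (n - m)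
        = 1 - (1 - x) ^ n := by
      have h := add_pow x (1 - x) n
      simp only [add_sub_cancel, one_pow] at h
      rw [Finset.range_eq_Ico] at h
      rw [Finset.sum_eq_sum_Ico_succ_bot (by omega : 0 < n + 1)] at h
      simp only [pow_zero, Nat.sub_zero, Nat.choose_zero_right, Nat.cast_one, one_mul,
        mul_one] at h
      rw [← Finset.Ico_add_one_right_eq_Icc]
      have : ∑ m ∈ Finset.Ico 1 (n + 1), (n.choose m : ℝ) * x ^ m * (1 - x) ^ (n - m)
          = ∑ m ∈ Finset.Ico 1 (n + 1), x ^ m * (1 - x) ^ (n - m) * (n.choose m : ℝ) := by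
        apply Finset.sum_congr rfl; intro m _; ring
      rw [this]
      linarith [h]
    unfold geomQ
    rw [← Finset.sum_div, key, div_self (ne_of_gt hd)]
  · intro n m hm hmn
    have hd := hden n (le_trans hm hmn)
    have hd' := hden (n + 1) (by omega)
    have hn1 : ((n:ℝ) + 1) ≠ 0 := by positivity
    have c1 : ((n+1).choose (m+1) : ℝ) * ((m:ℝ) + 1) = ((n:ℝ) + 1) * (n.choose m : ℝ) := by
      have h := Nat.add_one_mul_choose_eq n m
      have h2 := congrArg (Nat.cast : ℕ → ℝ) h
      push_cast at h2
      linear_combination -h2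
    have c2 : ((n+1).choose m : ℝ) * ((n:ℝ) + 1 - (m:ℝ)) = ((n:ℝ) + 1) * (n.choose m : ℝ) := by
      have h := Nat.choose_mul_succ_eq n m
      have hcast : ((n + 1 - m : ℕ) : ℝ) = (n:ℝ) + 1 - (m:ℝ) := by
        push_cast [Nat.cast_sub (by omega : m ≤ n + 1)]; ring
      have := congrArg (Nat.cast : ℕ → ℝ) h
      push_cast at this
      rw [← hcast]
      push_cast
      linarith [this]
    have e1 : (n + 1) - (m + 1) = n - m := by omega
    have e2 : (n + 1) - m = (n - m) + 1 := by omega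
    unfold geomQ
    rw [e1, e2]
    simp only [Nat.choose_one_right, Nat.add_sub_cancel, pow_one]
    have hE : (1 - (1 - x) ^ (n + 1)) ≠ 0 := ne_of_gt hd'
    have hD : (1 - (1 - x) ^ n) ≠ 0 := ne_of_gt hd
    field_simp
    push_cast
    linear_combination
      (-((1 - (1 - x) ^ n) * (1 - x) ^ (n - m) * x ^ (m + 1))) * c1
      + (-((1 - (1 - x) ^ n) * x ^ m * (1 - x) ^ (n - m + 1))) * c2
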